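/- A quadratic squarefree binomial q = q_{g1^{(1)}g1^{(2)}g1^{(3)}} q_{g2^{(1)}g2^{(2)}g2^{(3)}} − q_{h1^{(1)}h1^{(2)}h1^{(3)}} q_{h2^{(1)}h2^{(2)}h2^{(3)}} with distinct variables lies in ker φ_3 if and only if (after possibly swapping h_1 and h_2): (1) g1^{(1)}+g1^{(2)}+g1^{(3)} = h1^{(1)}+h1^{(2)}+h1^{(3)} and g2^{(1)}+g2^{(2)}+g2^{(3)} = h2^{(1)}+h2^{(2)}+h2^{(3)} in Z2, and (2) g1^{(i)}+g2^{(i)} = 1 = h1^{(i)}+h2^{(i)} in Z2 for all 1 ≤ i ≤ 3, with the multiset {(g1^{(i)})_i,(g2^{(i)})_i} different from {(h1^{(i)})_i,(h2^{(i)})_i}. -/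

import Mathlib

open MvPolynomial

noncomputable def phi (n : ℕ) :
    MvPolynomial (Fin n → ZMod 2) ℂ →ₐ[ℂ] MvPolynomial (ZMod 2 × Fin (n + 1)) ℂ :=
  aeval fun σ => (∏ i : Fin n, X (σ i, Fin.castSucc i)) * X (∑ i, σ i, Fin.last n)

noncomputable def Eexp (σ : Fin 3 → ZMod 2) : (ZMod 2 × Fin 4) →₀ ℕ :=
  (∑ i : Fin 3, Finsupp.single (σ i, Fin.castSucc i) 1)
    + Finsupp.single (∑ i, σ i, Fin.last 3) 1

lemma phi_X (σ : Fin 3 → ZMod 2) : phi 3 (X σ) = monomial (Eexp σ) 1 := by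
  simp only [phi, aeval_X, Eexp]
  rw [monomial_add_single, pow_one, monomial_sum_one]
  simp [X]

lemma Eexp_apply_cast (σ : Fin 3 → ZMod 2) (a : ZMod 2) (i : Fin 3) :
    Eexp σ (a, Fin.castSucc i) = if σ i = a then 1 else 0 := by
  classical
  have hlast : ¬ ((∑ i, σ i, Fin.last 3) : ZMod 2 × Fin 4) = (a, Fin.castSucc i) := by
    rw [Prod.ext_iff]; exact fun h => (Fin.castSucc_lt_last i).ne' h.2
  have key : ∀ j : Fin 3,
      (Finsupp.single (σ j, Fin.castSucc j) 1 : (ZMod 2 × Fin 4) →₀ ℕ) (a, Fin.castSucc i)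
        = if j = i then (if σ j = a then 1 else 0) else 0 := by
    intro j; rw [Finsupp.single_apply]
    by_cases h : j = i <;> simp [h, Prod.ext_iff, Fin.castSucc_inj]
  rw [Eexp, Finsupp.add_apply, Finsupp.finset_sum_apply, Finset.sum_congr rfl (fun j _ => key j),
      Finset.sum_ite_eq' Finset.univ i, if_pos (Finset.mem_univ i),
      Finsupp.single_apply, if_neg hlast, add_zero]

lemma Eexp_apply_last (σ : Fin 3 → ZMod 2) (a : ZMod 2) :
    Eexp σ (a, Fin.last 3) = if ∑ i, σ i = a then 1 else 0 := by
  classical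
  rw [Eexp, Finsupp.add_apply, Finsupp.finset_sum_apply,
      Finset.sum_eq_zero (fun j _ => by
        rw [Finsupp.single_apply, if_neg (by rw [Prod.ext_iff]; exact fun h => (Fin.castSucc_lt_last j).ne h.2)]),
      Finsupp.single_apply]
  simp [Prod.ext_iff, eq_comm]

set_option maxHeartbeats 4000000 in
lemma core : ∀ g₁ g₂ h₁ h₂ : Fin 3 → ZMod 2, g₁ ≠ g₂ → h₁ ≠ h₂ →
    ({g₁, g₂} : Multiset (Fin 3 → ZMod 2)) ≠ {h₁, h₂} →
    (((∀ i a, ((if g₁ i = a then 1 else 0) + (if g₂ i = a then 1 else 0) : ℕ)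
        = (if h₁ i = a then 1 else 0) + (if h₂ i = a then 1 else 0)) ∧
      (∀ a : ZMod 2, ((if ∑ i, g₁ i = a then 1 else 0 : ℕ) + (if ∑ i, g₂ i = a then 1 else 0))
        = (if ∑ i, h₁ i = a then 1 else 0) + (if ∑ i, h₂ i = a then 1 else 0))) ↔
    (((∑ i, g₁ i) = (∑ i, h₁ i) ∧ (∑ i, g₂ i) = (∑ i, h₂ i)) ∨
     ((∑ i, g₁ i) = (∑ i, h₂ i) ∧ (∑ i, g₂ i) = (∑ i, h₁ i))) ∧
      ∀ i : Fin 3, g₁ i + g₂ i = 1 ∧ h₁ i + h₂ i = 1) := by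
  decide

lemma Eexp_eq_iff (g₁ g₂ h₁ h₂ : Fin 3 → ZMod 2) :
    Eexp g₁ + Eexp g₂ = Eexp h₁ + Eexp h₂ ↔
      ((∀ i a, ((if g₁ i = a then 1 else 0) + (if g₂ i = a then 1 else 0) : ℕ)
        = (if h₁ i = a then 1 else 0) + (if h₂ i = a then 1 else 0)) ∧
      (∀ a : ZMod 2, ((if ∑ i, g₁ i = a then 1 else 0 : ℕ) + (if ∑ i, g₂ i = a then 1 else 0))
        = (if ∑ i, h₁ i = a then 1 else 0) + (if ∑ i, h₂ i = a then 1 else 0))) := by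
  constructor
  · intro h
    constructor
    · intro i a
      have := DFunLike.congr_fun h (a, Fin.castSucc i)
      simpa [Finsupp.add_apply, Eexp_apply_cast] using this
    · intro a
      have := DFunLike.congr_fun h (a, Fin.last 3)
      rw [Finsupp.add_apply, Finsupp.add_apply, Eexp_apply_last, Eexp_apply_last,
        Eexp_apply_last, Eexp_apply_last] at this
      exact this
  · rintro ⟨h1, h2⟩
    ext ⟨a, j⟩
    induction j using Fin.lastCases with
    | last =>
      rw [Finsupp.add_apply, Finsupp.add_apply, Eexp_apply_last, Eexp_apply_last,
        Eexp_apply_last, Eexp_apply_last]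
      exact h2 a
    | cast i => simpa [Finsupp.add_apply, Eexp_apply_cast] using h1 i a

/-- A nonzero squarefree quadratic binomial `q_{g₁}q_{g₂} − q_{h₁}q_{h₂}` lies in `ker φ₃`
iff, after possibly swapping `h₁` and `h₂`, the coordinate sums match
(`Σ g₁ = Σ h₁`, `Σ g₂ = Σ h₂`) and `g₁⁽ⁱ⁾ + g₂⁽ⁱ⁾ = 1 = h₁⁽ⁱ⁾ + h₂⁽ⁱ⁾` for all `1 ≤ i ≤ 3`. -/
theorem stmt_10 (g₁ g₂ h₁ h₂ : Fin 3 → ZMod 2)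
    (hg : g₁ ≠ g₂) (hh : h₁ ≠ h₂)
    (hne : ({g₁, g₂} : Multiset (Fin 3 → ZMod 2)) ≠ {h₁, h₂}) :
    X g₁ * X g₂ - X h₁ * X h₂ ∈ RingHom.ker (phi 3).toRingHom ↔
      ∃ h₁' h₂' : Fin 3 → ZMod 2,
        ({h₁', h₂'} : Multiset (Fin 3 → ZMod 2)) = {h₁, h₂} ∧
        (∑ i, g₁ i) = (∑ i, h₁' i) ∧ (∑ i, g₂ i) = (∑ i, h₂' i) ∧
        ∀ i : Fin 3, g₁ i + g₂ i = 1 ∧ h₁' i + h₂' i = 1 := by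
  rw [RingHom.sub_mem_ker_iff]
  have hmap : ∀ a b : Fin 3 → ZMod 2, (phi 3).toRingHom (X a * X b)
      = monomial (Eexp a + Eexp b) 1 := by
    intro a b
    simp [map_mul, phi_X, monomial_mul]
  rw [hmap, hmap, monomial_eq_monomial_iff]
  have hiff : Eexp g₁ + Eexp g₂ = Eexp h₁ + Eexp h₂ ∧ (1 : ℂ) = 1 ∨ (1 : ℂ) = 0 ∧ (1 : ℂ) = 0
      ↔ Eexp g₁ + Eexp g₂ = Eexp h₁ + Eexp h₂ := by simp
  rw [hiff, Eexp_eq_iff, core g₁ g₂ h₁ h₂ hg hh hne]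
  constructor
  · rintro ⟨hsum | hsum, hcoord⟩
    · exact ⟨h₁, h₂, rfl, hsum.1, hsum.2, fun i => ⟨(hcoord i).1, (hcoord i).2⟩⟩
    · exact ⟨h₂, h₁, by rw [Multiset.pair_comm], hsum.1, hsum.2,
        fun i => ⟨(hcoord i).1, by rw [add_comm]; exact (hcoord i).2⟩⟩
  · rintro ⟨h₁', h₂', hpair, hs1, hs2, hcoord⟩
    have : (h₁' = h₁ ∧ h₂' = h₂) ∨ (h₁' = h₂ ∧ h₂' = h₁) := by
      rw [Multiset.insert_eq_cons, Multiset.insert_eq_cons, Multiset.cons_eq_cons] at hpair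
      rcases hpair with ⟨e1, e2⟩ | ⟨_, cs, hc1, hc2⟩
      · exact Or.inl ⟨e1, by simpa using e2⟩
      · rw [Multiset.singleton_eq_cons_iff] at hc1 hc2
        exact Or.inr ⟨hc2.1.symm, hc1.1⟩
    rcases this with ⟨e1, e2⟩ | ⟨e1, e2⟩
    · subst e1; subst e2
      exact ⟨Or.inl ⟨hs1, hs2⟩, fun i => ⟨(hcoord i).1, (hcoord i).2⟩⟩
    · subst e1; subst e2
      exact ⟨Or.inr ⟨hs1, hs2⟩, fun i => ⟨(hcoord i).1, by rw [add_comm]; exact (hcoord i).2⟩⟩
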